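/- Let v_1,…,v_n ∈ ℝ^d, and consider a partition matroid on {1,…,n} with parts P_1,…,P_s and integers k_1,…,k_s ≥ 1 of rank k = Σ_i k_i, with k ≤ d. Let μ_M(S) = det(Σ_{i∈S} v_i v_iᵀ) if S is a basis of the partition matroid and 0 otherwise. Then there exists a map c assigning to each V ⊆ {1,…,n} a subset c(V) ⊆ V with |c(V)| ≤ sk, which is a k^{2k}-composable coreset for maximizing μ_M over k-element sets. -/

import Mathlib

open Finset

/-- `detVal v S = det(Σ_{i∈S} v_i v_iᵀ)`. -/
noncomputable def detVal (n d : ℕ) (v : Fin n → Fin d → ℝ)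
    (S : Finset (Fin n)) : ℝ :=
  (∑ i ∈ S, Matrix.vecMulVec (v i) (v i)).det

/-- A map `c` with `c V ⊆ V` is an `α`-composable coreset for maximizing `μ` over
`k`-element sets. -/
def ComposableCoreset (n k : ℕ) (α : ℝ) (μ : Finset (Fin n) → ℝ)
    (c : Finset (Fin n) → Finset (Fin n)) : Prop :=
  (∀ V, c V ⊆ V) ∧
  ∀ (m : ℕ) (Vs : Fin m → Finset (Fin n)) (S : Finset (Fin n)),
    S ⊆ Finset.univ.biUnion Vs → S.card = k →
    ∃ T : Finset (Fin n),
      T ⊆ Finset.univ.biUnion (fun i => c (Vs i)) ∧ T.card = k ∧ μ S ≤ α * μ T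

namespace Stmt11Aux

open Matrix

variable {n d : ℕ} (v : Fin n → Fin d → ℝ)

/-- Gram determinant of a tuple of vectors. -/
noncomputable def gd {r : ℕ} (u : Fin r → Fin d → ℝ) : ℝ :=
  (Matrix.of u * (Matrix.of u)ᵀ).det

lemma vecMul_of_eq {r : ℕ} (u : Fin r → Fin d → ℝ) (c : Fin r → ℝ) :
    c ᵥ* (Matrix.of u) = ∑ i, c i • u i := by
  ext x
  simp [Matrix.vecMul, dotProduct, Finset.sum_apply]

lemma det_updateRow_one {r : ℕ} (i0 : Fin r) (c : Fin r → ℝ) :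
    (Matrix.updateRow (1 : Matrix (Fin r) (Fin r) ℝ) i0 c).det = c i0 := by
  have h1 : (1 : Matrix (Fin r) (Fin r) ℝ)ᵀ = 1 := Matrix.transpose_one
  have := Matrix.updateRow_transpose (M := (1 : Matrix (Fin r) (Fin r) ℝ)) (j := i0) (c := c)
  rw [h1] at this
  rw [this, Matrix.det_transpose]
  have := Matrix.cramer_one (n := Fin r) (α := ℝ)
  have h2 := congrFun (congrFun (congrArg DFunLike.coe this) c) i0
  rw [Matrix.cramer_apply] at h2
  simpa using h2

lemma update_mul_eq {r : ℕ} (u : Fin r → Fin d → ℝ) (c : Fin r → ℝ) (i0 : Fin r) :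
    Matrix.of (Function.update u i0 (∑ i, c i • u i)) =
      Matrix.updateRow (1 : Matrix (Fin r) (Fin r) ℝ) i0 c * Matrix.of u := by
  ext i x
  by_cases hi : i = i0
  · subst hi
    simp [Matrix.mul_apply, Matrix.updateRow_self, Finset.sum_apply, Matrix.of_apply]
  · have : ∀ j, Matrix.updateRow (1 : Matrix (Fin r) (Fin r) ℝ) i0 c i j =
        (1 : Matrix (Fin r) (Fin r) ℝ) i j := fun j => by
      rw [Matrix.updateRow_ne hi]
    simp only [Matrix.mul_apply, this, Function.update_of_ne hi, Matrix.of_apply]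
    simp [Matrix.one_apply, ite_mul]

lemma gd_update {r : ℕ} (u : Fin r → Fin d → ℝ) (c : Fin r → ℝ) (i0 : Fin r) :
    gd (Function.update u i0 (∑ i, c i • u i)) = (c i0)^2 * gd u := by
  unfold gd
  rw [update_mul_eq, Matrix.transpose_mul]
  have hassoc : Matrix.updateRow (1 : Matrix (Fin r) (Fin r) ℝ) i0 c * Matrix.of u *
      ((Matrix.of u)ᵀ * (Matrix.updateRow (1 : Matrix (Fin r) (Fin r) ℝ) i0 c)ᵀ) =
      Matrix.updateRow (1 : Matrix (Fin r) (Fin r) ℝ) i0 c * (Matrix.of u * (Matrix.of u)ᵀ) *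
      (Matrix.updateRow (1 : Matrix (Fin r) (Fin r) ℝ) i0 c)ᵀ := by
    simp only [Matrix.mul_assoc]
  rw [hassoc, Matrix.det_mul, Matrix.det_mul, Matrix.det_transpose, det_updateRow_one]
  ring

lemma li_of_gd_ne_zero {r : ℕ} {u : Fin r → Fin d → ℝ} (h : gd u ≠ 0) :
    LinearIndependent ℝ u := by
  rw [Fintype.linearIndependent_iff]
  intro c hc
  by_contra hne
  push_neg at hne
  obtain ⟨i, hi⟩ := hne
  have hcne : c ≠ 0 := fun h => hi (congrFun h i)
  apply h
  rw [gd, ← Matrix.exists_vecMul_eq_zero_iff]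
  refine ⟨c, hcne, ?_⟩
  rw [← Matrix.vecMul_vecMul, vecMul_of_eq, hc, Matrix.zero_vecMul]

lemma gd_pos_of_li {r : ℕ} {u : Fin r → Fin d → ℝ} (h : LinearIndependent ℝ u) :
    0 < gd u := by
  have hsemi : (Matrix.of u * (Matrix.of u)ᵀ).PosSemidef := by
    have := Matrix.posSemidef_self_mul_conjTranspose (Matrix.of u)
    rwa [Matrix.conjTranspose_eq_transpose_of_trivial] at this
  have hdef : (Matrix.of u * (Matrix.of u)ᵀ).PosDef := by
    refine Matrix.PosDef.of_dotProduct_mulVec_pos hsemi.isHermitian (fun x hx => ?_)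
    have hy : ∀ y : Fin d → ℝ, star x ⬝ᵥ ((Matrix.of u * (Matrix.of u)ᵀ) *ᵥ x) =
        (x ᵥ* Matrix.of u) ⬝ᵥ (x ᵥ* Matrix.of u) := by
      intro y
      rw [← Matrix.mulVec_mulVec, Matrix.dotProduct_mulVec, Matrix.mulVec_transpose]
      simp
    rw [hy 0]
    set w := x ᵥ* Matrix.of u with hw
    have hwne : w ≠ 0 := by
      intro hww
      apply hx
      rw [hw, vecMul_of_eq] at hww
      exact funext ((Fintype.linearIndependent_iff.mp h) x hww)
    have h0 : w ⬝ᵥ w ≠ 0 := fun hz => hwne (dotProduct_self_eq_zero.mp hz)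
    have h1 : 0 ≤ w ⬝ᵥ w := Finset.sum_nonneg fun i _ => mul_self_nonneg _
    exact lt_of_le_of_ne h1 (Ne.symm h0)
  exact hdef.det_pos

lemma exists_good (W : Finset (Fin n)) :
    ∃ B : Finset (Fin n), B ⊆ W ∧ B.card ≤ d ∧
      ∀ j ∈ W, ∃ c : Fin n → ℝ, (∀ l, |c l| ≤ 1) ∧
        ∀ x, v j x = ∑ l ∈ B, c l * v l x := by
  classical
  obtain ⟨bs, hbsub, hbspan, hbli⟩ := exists_linearIndependent ℝ (v '' (W : Set (Fin n)))
  have hfin : bs.Finite := ((W.finite_toSet).image v).subset hbsub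
  set s : Finset (Fin d → ℝ) := hfin.toFinset with hs
  have hsc : (s : Set (Fin d → ℝ)) = bs := hfin.coe_toFinset
  set r : ℕ := s.card with hr
  set e : ↥s ≃ Fin r := s.equivFin with he
  set g : Fin r → (Fin d → ℝ) := fun i => ((e.symm i : ↥s) : Fin d → ℝ) with hg
  have hgli : LinearIndependent ℝ g := by
    rw [← hsc] at hbli
    exact hbli.comp e.symm e.symm.injective
  have hrange : Set.range g = bs := by
    rw [← hsc]
    ext y; constructor
    · rintro ⟨i, rfl⟩; exact (e.symm i).2
    · intro hy; exact ⟨e ⟨y, hy⟩, by simp [hg]⟩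
  have hex : ∀ i : Fin r, ∃ j, j ∈ W ∧ v j = g i := by
    intro i
    have : g i ∈ v '' (W : Set (Fin n)) := hbsub (hrange ▸ Set.mem_range_self i)
    obtain ⟨j, hj, hvj⟩ := this
    exact ⟨j, hj, hvj⟩
  choose t htW htv using hex
  have hvt : v ∘ t = g := funext htv
  set Cand : Finset (Fin r → Fin n) := Fintype.piFinset (fun _ => W) with hCand
  have htC : t ∈ Cand := Fintype.mem_piFinset.mpr htW
  obtain ⟨b, hbmem, hbmax⟩ := Finset.exists_max_image Cand (fun b => gd (v ∘ b)) ⟨t, htC⟩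
  have hbW : ∀ i, b i ∈ W := Fintype.mem_piFinset.mp hbmem
  have hgt : 0 < gd (v ∘ t) := by rw [hvt]; exact gd_pos_of_li hgli
  have hgb : 0 < gd (v ∘ b) := lt_of_lt_of_le hgt (hbmax t htC)
  have hlib : LinearIndependent ℝ (v ∘ b) := li_of_gd_ne_zero hgb.ne'
  have hbinj : Function.Injective b := Function.Injective.of_comp hlib.injective
  set N := Submodule.span ℝ (v '' (W : Set (Fin n))) with hN
  haveI : FiniteDimensional ℝ N :=
    FiniteDimensional.span_of_finite ℝ ((W.finite_toSet).image v)
  have hNt : Submodule.span ℝ (Set.range (v ∘ t)) = N := by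
    rw [hvt, hrange, hbspan]
  have hble : Submodule.span ℝ (Set.range (v ∘ b)) ≤ N := by
    rw [Submodule.span_le]
    rintro y ⟨i, rfl⟩
    exact Submodule.subset_span ⟨b i, hbW i, rfl⟩
  have hfr : Submodule.span ℝ (Set.range (v ∘ b)) = N := by
    apply Submodule.eq_of_le_of_finrank_eq hble
    have h2 : LinearIndependent ℝ (v ∘ t) := by rw [hvt]; exact hgli
    rw [finrank_span_eq_card hlib, ← hNt, finrank_span_eq_card h2]
  have hrd : r ≤ d := by
    have h1 := hlib.fintype_card_le_finrank
    rwa [Module.finrank_fintype_fun_eq_card, Fintype.card_fin, Fintype.card_fin] at h1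
  refine ⟨Finset.image b Finset.univ, ?_, ?_, ?_⟩
  · intro l hl
    obtain ⟨i, _, rfl⟩ := Finset.mem_image.mp hl
    exact hbW i
  · rw [Finset.card_image_of_injective _ hbinj, Finset.card_univ, Fintype.card_fin]
    exact hrd
  intro j hj
  have hjN : v j ∈ N := Submodule.subset_span ⟨j, hj, rfl⟩
  rw [← hfr] at hjN
  obtain ⟨cc, hcc⟩ := (Submodule.mem_span_range_iff_exists_fun ℝ).mp hjN
  have hccb : ∀ i0, |cc i0| ≤ 1 := by
    intro i0
    set b' : Fin r → Fin n := Function.update b i0 j with hb'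
    have hb'C : b' ∈ Cand := by
      apply Fintype.mem_piFinset.mpr
      intro i
      by_cases hi : i = i0
      · subst hi; simp [hb', hj]
      · simp [hb', Function.update_of_ne hi, hbW i]
    have hcomp : v ∘ b' = Function.update (v ∘ b) i0 (v j) := by
      funext a
      by_cases ha : a = i0
      · subst ha; simp [hb']
      · simp [hb', Function.update_of_ne ha]
    have hgd : gd (v ∘ b') = (cc i0)^2 * gd (v ∘ b) := by
      rw [hcomp, ← hcc]
      exact gd_update (v ∘ b) cc i0
    have hle : (cc i0)^2 * gd (v ∘ b) ≤ gd (v ∘ b) := by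
      rw [← hgd]; exact hbmax b' hb'C
    have hsq : (cc i0)^2 ≤ 1 := by
      by_contra hgt1
      push_neg at hgt1
      nlinarith
    nlinarith [abs_nonneg (cc i0), sq_abs (cc i0)]
  set c : Fin n → ℝ := fun l => if h : ∃ i, b i = l then cc h.choose else 0 with hc
  have hcb : ∀ i, c (b i) = cc i := by
    intro i
    have hex : ∃ i', b i' = b i := ⟨i, rfl⟩
    have := hex.choose_spec
    rw [hc]
    simp only [dif_pos hex]
    rw [hbinj this]
  refine ⟨c, ?_, ?_⟩
  · intro l
    rw [hc]
    by_cases h : ∃ i, b i = l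
    · simp only [dif_pos h]; exact hccb _
    · simp [dif_neg h]
  · intro x
    rw [Finset.sum_image (fun a _ a' _ h => hbinj h)]
    have := congrFun hcc x
    rw [Finset.sum_apply] at this
    rw [← this]
    apply Finset.sum_congr rfl
    intro i _
    rw [hcb i]
    simp

lemma sum_vecMulVec_eq (S : Finset (Fin n)) (b : Fin d → Fin n)
    (hinj : Function.Injective b) (hmem : ∀ a, b a ∈ S) (hcard : S.card = d) :
    (∑ i ∈ S, Matrix.vecMulVec (v i) (v i)) =
      (Matrix.of fun a => v (b a))ᵀ * (Matrix.of fun a => v (b a)) := by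
  have hS : S = Finset.image b Finset.univ := by
    refine (Finset.eq_of_subset_of_card_le ?_ ?_).symm
    · intro l hl; obtain ⟨a, _, rfl⟩ := Finset.mem_image.mp hl; exact hmem a
    · rw [Finset.card_image_of_injective _ hinj, Finset.card_univ, Fintype.card_fin, hcard]
  ext x y
  rw [Matrix.sum_apply, hS, Finset.sum_image (fun a _ a' _ h => hinj h), Matrix.mul_apply]
  apply Finset.sum_congr rfl
  intro a _
  simp [Matrix.vecMulVec_apply]

lemma detVal_eq_sq (S : Finset (Fin n)) (b : Fin d → Fin n)
    (hinj : Function.Injective b) (hmem : ∀ a, b a ∈ S) (hcard : S.card = d) :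
    detVal n d v S = (Matrix.det (Matrix.of fun a => v (b a)))^2 := by
  rw [detVal, sum_vecMulVec_eq v S b hinj hmem hcard, Matrix.det_mul, Matrix.det_transpose, sq]

lemma detVal_eq_zero (S : Finset (Fin n)) (hlt : S.card < d) : detVal n d v S = 0 := by
  classical
  set m := S.card with hm
  set e : Fin m ↪o Fin n := S.orderEmbOfFin rfl with he
  set u : Fin d → Fin d → ℝ :=
    fun a => if h : (a : ℕ) < m then v (e ⟨a.1, h⟩) else 0 with hu
  have hsum : (∑ i ∈ S, Matrix.vecMulVec (v i) (v i)) = (Matrix.of u)ᵀ * (Matrix.of u) := by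
    have hS : S = Finset.image (fun a => e a) Finset.univ := by
      refine (Finset.eq_of_subset_of_card_le ?_ ?_).symm
      · intro l hl; obtain ⟨a, _, rfl⟩ := Finset.mem_image.mp hl
        exact S.orderEmbOfFin_mem rfl a
      · rw [Finset.card_image_of_injective _ e.injective, Finset.card_univ, Fintype.card_fin]
    ext x y
    rw [Matrix.sum_apply, Matrix.mul_apply]
    set F : ℕ → ℝ := fun a => if h : a < m then v (e ⟨a, h⟩) x * v (e ⟨a, h⟩) y else 0 with hF
    have h1 : ∀ a : Fin d, (Matrix.of u)ᵀ x a * (Matrix.of u) a y = F a.1 := by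
      intro a
      by_cases h : (a : ℕ) < m
      · simp only [Matrix.transpose_apply, Matrix.of_apply, hu, dif_pos h, hF]
      · simp only [Matrix.transpose_apply, Matrix.of_apply, hu, dif_neg h, hF,
          Pi.zero_apply, mul_zero, zero_mul]
    have h2 : ∑ a : Fin d, (Matrix.of u)ᵀ x a * (Matrix.of u) a y = ∑ a ∈ Finset.range d, F a := by
      rw [← Fin.sum_univ_eq_sum_range]
      exact Finset.sum_congr rfl fun a _ => h1 a
    have h3 : ∑ a ∈ Finset.range d, F a = ∑ a ∈ Finset.range m, F a := by
      refine (Finset.sum_subset (Finset.range_subset_range.mpr hlt.le) ?_).symm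
      intro a _ ha
      rw [Finset.mem_range, not_lt] at ha
      exact dif_neg (not_lt.mpr ha)
    have h4 : ∑ a ∈ Finset.range m, F a = ∑ a : Fin m, v (e a) x * v (e a) y := by
      rw [← Fin.sum_univ_eq_sum_range]
      refine Finset.sum_congr rfl fun a _ => ?_
      rw [hF]
      simp only [dif_pos a.2, Fin.eta]
    rw [h2, h3, h4, hS, Finset.sum_image (fun a _ a' _ h => e.injective h)]
    apply Finset.sum_congr rfl
    intro a _
    simp [Matrix.vecMulVec_apply]
  have hdet0 : (Matrix.of u).det = 0 := by
    apply Matrix.det_eq_zero_of_row_eq_zero ⟨m, hlt⟩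
    intro x
    simp only [Matrix.of_apply, hu, dif_neg (lt_irrefl m), Pi.zero_apply]
  rw [detVal, hsum, Matrix.det_mul, Matrix.det_transpose, hdet0, mul_zero]

lemma min_sum_le {s k : ℕ} (a : Fin s → ℕ) : min (∑ i, a i) k ≤ ∑ i, min (a i) k := by
  by_cases h : ∃ i, k ≤ a i
  · obtain ⟨i, hi⟩ := h
    calc min (∑ i, a i) k ≤ k := min_le_right _ _
      _ = min (a i) k := (min_eq_right hi).symm
      _ ≤ ∑ i, min (a i) k :=
        Finset.single_le_sum (f := fun i => min (a i) k) (fun _ _ => Nat.zero_le _)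
          (Finset.mem_univ i)
  · push_neg at h
    have h2 : ∀ i, min (a i) k = a i := fun i => min_eq_left (h i).le
    calc min (∑ i, a i) k ≤ ∑ i, a i := min_le_left _ _
      _ = ∑ i, min (a i) k := by simp [h2]

lemma exists_T {n k : ℕ} (c : Finset (Fin n) → Finset (Fin n))
    (hsub : ∀ V, c V ⊆ V) (hmin : ∀ V, min V.card k ≤ (c V).card)
    {m : ℕ} (Vs : Fin m → Finset (Fin n)) (S : Finset (Fin n))
    (hS : S ⊆ Finset.univ.biUnion Vs) (hcard : S.card = k) :
    ∃ T, T ⊆ Finset.univ.biUnion (fun i => c (Vs i)) ∧ T.card = k := by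
  by_cases h : ∃ m0, k ≤ (Vs m0).card
  · obtain ⟨m0, hm0⟩ := h
    have hk : k ≤ (c (Vs m0)).card := by
      have := hmin (Vs m0)
      rwa [min_eq_right hm0] at this
    obtain ⟨T, hT, hTc⟩ := Finset.exists_subset_card_eq hk
    exact ⟨T, hT.trans (Finset.subset_biUnion_of_mem (fun i => c (Vs i))
      (Finset.mem_univ m0)), hTc⟩
  · push_neg at h
    have hceq : ∀ m0, c (Vs m0) = Vs m0 := by
      intro m0
      apply Finset.eq_of_subset_of_card_le (hsub _)
      have := hmin (Vs m0)
      rwa [min_eq_left (h m0).le] at this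
    refine ⟨S, ?_, hcard⟩
    have hbu : Finset.univ.biUnion (fun i => c (Vs i)) = Finset.univ.biUnion Vs :=
      Finset.biUnion_congr rfl (fun i _ => hceq i)
    rw [hbu]
    exact hS

lemma card_partition {n s : ℕ} (P : Fin s → Finset (Fin n))
    (hPdisj : ∀ i j : Fin s, i ≠ j → Disjoint (P i) (P j))
    (hPcover : Finset.univ.biUnion P = (Finset.univ : Finset (Fin n)))
    (V : Finset (Fin n)) : V.card = ∑ i, (V ∩ P i).card := by
  have hV : V = Finset.univ.biUnion (fun i => V ∩ P i) := by
    ext x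
    simp only [Finset.mem_biUnion, Finset.mem_inter, Finset.mem_univ, true_and]
    constructor
    · intro hx
      have hx2 : x ∈ Finset.univ.biUnion P := by rw [hPcover]; exact Finset.mem_univ x
      obtain ⟨i, _, hi⟩ := Finset.mem_biUnion.mp hx2
      exact ⟨i, hx, hi⟩
    · rintro ⟨i, hx, _⟩; exact hx
  conv_lhs => rw [hV]
  rw [Finset.card_biUnion]
  intro i _ j _ hij
  exact (hPdisj i j hij).mono Finset.inter_subset_right Finset.inter_subset_right

lemma exists_padded (k : ℕ) (hdk : d ≤ k) (W : Finset (Fin n)) :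
    ∃ D : Finset (Fin n), D ⊆ W ∧ D.card ≤ k ∧ min W.card k ≤ D.card ∧
      ∀ j ∈ W, ∃ c : Fin n → ℝ, (∀ l, |c l| ≤ 1) ∧
        ∀ x, v j x = ∑ l ∈ D, c l * v l x := by
  classical
  obtain ⟨B, hBW, hBc, hBcoef⟩ := exists_good v W
  have hBk : B.card ≤ k := hBc.trans hdk
  obtain ⟨D, hBD, hDW, hDc⟩ := Finset.exists_subsuperset_card_eq hBW (le_max_left _ _)
    (max_le (Finset.card_le_card hBW) (min_le_left _ _))
  refine ⟨D, hDW, ?_, ?_, ?_⟩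
  · rw [hDc]; exact max_le hBk (min_le_right _ _)
  · rw [hDc]; exact le_max_right _ _
  · intro j hj
    obtain ⟨c, hc1, hc2⟩ := hBcoef j hj
    refine ⟨fun l => if l ∈ B then c l else 0, fun l => ?_, fun x => ?_⟩
    · by_cases h : l ∈ B
      · simpa [h] using hc1 l
      · simp [h]
    · rw [hc2 x]
      rw [show (∑ l ∈ B, c l * v l x) = ∑ l ∈ B, (if l ∈ B then c l else 0) * v l x from
        Finset.sum_congr rfl fun l hl => by rw [if_pos hl]]
      exact Finset.sum_subset hBD (fun l _ hl => by rw [if_neg hl, zero_mul])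

end Stmt11Aux


open Stmt11Aux

theorem stmt11 (n d s k : ℕ) (v : Fin n → Fin d → ℝ)
    (P : Fin s → Finset (Fin n))
    (hPdisj : ∀ i j : Fin s, i ≠ j → Disjoint (P i) (P j))
    (hPcover : Finset.univ.biUnion P = (Finset.univ : Finset (Fin n)))
    (kk : Fin s → ℕ) (hkk : ∀ i, 1 ≤ kk i) (hsum : ∑ i, kk i = k) (hkd : k ≤ d) :
    ∃ c : Finset (Fin n) → Finset (Fin n),
      (∀ V, c V ⊆ V) ∧
      (∀ V, (c V).card ≤ s * k) ∧
      ComposableCoreset n k ((k : ℝ) ^ (2 * k))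
        (fun S => if ∀ i, (S ∩ P i).card = kk i then detVal n d v S else 0) c := by
  classical
  have hα : (0:ℝ) ≤ (k : ℝ) ^ (2 * k) := by positivity
  have hks : k ≠ 0 → 1 ≤ s := by
    intro hk
    rcases Nat.eq_zero_or_pos s with hs | hs
    · subst hs
      simp at hsum
      omega
    · exact hs
  rcases eq_or_lt_of_le hkd with heq | hlt
  · -- k = d : main case
    subst heq
    choose cpad hpadsub hpadk hpadmin hpadcoef using exists_padded v k le_rfl
    set c : Finset (Fin n) → Finset (Fin n) :=
      fun V => Finset.univ.biUnion (fun i => cpad (V ∩ P i)) with hc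
    have hsubc : ∀ V, c V ⊆ V := by
      intro V l hl
      rw [hc] at hl
      obtain ⟨i, _, hi⟩ := Finset.mem_biUnion.mp hl
      exact Finset.mem_of_mem_inter_left (hpadsub (V ∩ P i) hi)
    have hminc : ∀ V, min V.card k ≤ (c V).card := by
      intro V
      have hdisj : ∀ i ∈ (Finset.univ : Finset (Fin s)), ∀ j ∈ (Finset.univ : Finset (Fin s)),
          i ≠ j → Disjoint (cpad (V ∩ P i)) (cpad (V ∩ P j)) := by
        intro i _ j _ hij
        refine (hPdisj i j hij).mono ?_ ?_
        · exact (hpadsub (V ∩ P i)).trans Finset.inter_subset_right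
        · exact (hpadsub (V ∩ P j)).trans Finset.inter_subset_right
      rw [hc]
      simp only []
      rw [Finset.card_biUnion hdisj]
      calc min V.card k = min (∑ i, (V ∩ P i).card) k := by
            rw [← card_partition P hPdisj hPcover V]
        _ ≤ ∑ i, min (V ∩ P i).card k := min_sum_le _
        _ ≤ ∑ i, (cpad (V ∩ P i)).card :=
            Finset.sum_le_sum (fun i _ => hpadmin (V ∩ P i))
    have huniq : ∀ {x : Fin n} {i j : Fin s}, x ∈ P i → x ∈ P j → i = j := by
      intro x i j hi hj
      by_contra hij
      exact Finset.disjoint_left.mp (hPdisj i j hij) hi hj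
    refine ⟨c, hsubc, ?_, hsubc, ?_⟩
    · intro V
      calc (c V).card ≤ ∑ i, (cpad (V ∩ P i)).card := Finset.card_biUnion_le
        _ ≤ ∑ _i : Fin s, k := Finset.sum_le_sum (fun i _ => hpadk (V ∩ P i))
        _ = s * k := by rw [Finset.sum_const, Finset.card_univ, Fintype.card_fin, smul_eq_mul]
    intro m Vs S hSsub hScard
    obtain ⟨T0, hT01, hT02⟩ := exists_T c hsubc hminc Vs S hSsub hScard
    have hmu_nonneg : ∀ T : Finset (Fin n), T.card = k →
        0 ≤ (if ∀ i, (T ∩ P i).card = kk i then detVal n k v T else 0) := by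
      intro T hT
      split_ifs with h
      · rw [detVal_eq_sq v T (fun a => T.orderEmbOfFin hT a)
          (fun a a' hh => (T.orderEmbOfFin hT).injective hh)
          (fun a => T.orderEmbOfFin_mem hT a) hT]
        exact sq_nonneg _
      · exact le_refl 0
    by_cases hpos : 0 < (if ∀ i, (S ∩ P i).card = kk i then detVal n k v S else 0)
    swap
    · refine ⟨T0, hT01, hT02, ?_⟩
      simp only []
      exact le_trans (not_lt.mp hpos) (mul_nonneg hα (hmu_nonneg T0 hT02))
    have hbasis : ∀ i, (S ∩ P i).card = kk i := by
      by_contra h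
      rw [if_neg h] at hpos
      exact lt_irrefl 0 hpos
    rw [if_pos hbasis] at hpos
    -- enumeration of S
    set eS : Fin k → Fin n := fun a => S.orderEmbOfFin hScard a with heS
    have heSinj : Function.Injective eS := fun a a' hh => (S.orderEmbOfFin hScard).injective hh
    have heSmem : ∀ a, eS a ∈ S := fun a => S.orderEmbOfFin_mem hScard a
    have heSsurj : ∀ l ∈ S, ∃ a, eS a = l := by
      intro l hl
      have := S.range_orderEmbOfFin hScard
      rw [Set.ext_iff] at this
      exact (this l).mpr hl
    have hmex : ∀ a : Fin k, ∃ m0, eS a ∈ Vs m0 := by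
      intro a
      obtain ⟨m0, _, h⟩ := Finset.mem_biUnion.mp (hSsub (heSmem a))
      exact ⟨m0, h⟩
    choose ma hma using hmex
    have hiex : ∀ a : Fin k, ∃ i0, eS a ∈ P i0 := by
      intro a
      have h2 : eS a ∈ Finset.univ.biUnion P := by rw [hPcover]; exact Finset.mem_univ _
      obtain ⟨i0, _, h⟩ := Finset.mem_biUnion.mp h2
      exact ⟨i0, h⟩
    choose ia hia using hiex
    set Wa : Fin k → Finset (Fin n) := fun a => Vs (ma a) ∩ P (ia a) with hWa
    have hjWa : ∀ a, eS a ∈ Wa a := fun a => Finset.mem_inter.mpr ⟨hma a, hia a⟩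
    choose co hco1 hco3 using fun a => hpadcoef (Wa a) (eS a) (hjWa a)
    set Ba : Fin k → Finset (Fin n) := fun a => cpad (Wa a) with hBa
    have hrow : ∀ a, v (eS a) = ∑ l ∈ Ba a, co a l • v l := by
      intro a
      funext x
      rw [hco3 a x, Finset.sum_apply]
      exact Finset.sum_congr rfl (fun l _ => rfl)
    set M0 : Matrix (Fin k) (Fin k) ℝ := Matrix.of fun a => v (eS a) with hM0
    have hSdet : detVal n k v S = (M0.det)^2 := detVal_eq_sq v S eS heSinj heSmem hScard
    set F := (Matrix.detRowAlternating : ((Fin k) → ℝ) [⋀^Fin k]→ₗ[ℝ] ℝ) with hF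
    have hdet : M0.det = ∑ p ∈ Fintype.piFinset Ba,
        (∏ a, co a (p a)) * Matrix.det (Matrix.of fun a => v (p a)) := by
      have h0 : M0.det = F.toMultilinearMap (fun a => v (eS a)) := rfl
      rw [h0]
      have h1 : (fun a => v (eS a)) = fun a => ∑ l ∈ Ba a, co a l • v l := funext hrow
      rw [h1, F.toMultilinearMap.map_sum_finset (fun a l => co a l • v l) Ba]
      refine Finset.sum_congr rfl (fun p _ => ?_)
      rw [MultilinearMap.map_smul_univ]
      rw [smul_eq_mul]
      rfl
    set G : (Fin k → Fin n) → ℝ := fun p => |Matrix.det (Matrix.of fun a => v (p a))| with hG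
    have hPine : (Fintype.piFinset Ba).Nonempty := by
      by_contra hne
      rw [Finset.not_nonempty_iff_eq_empty] at hne
      rw [hne, Finset.sum_empty] at hdet
      rw [hSdet, hdet] at hpos
      norm_num at hpos
    obtain ⟨pst, hpmem, hpmax⟩ := Finset.exists_max_image (Fintype.piFinset Ba) G hPine
    have hcardB : ∀ a, (Ba a).card ≤ k := fun a => hpadk (Wa a)
    have hNk : (Fintype.piFinset Ba).card ≤ k ^ k := by
      rw [Fintype.card_piFinset]
      calc ∏ a, (Ba a).card ≤ ∏ _a : Fin k, k :=
            Finset.prod_le_prod' (fun a _ => hcardB a)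
        _ = k ^ k := by rw [Finset.prod_const, Finset.card_univ, Fintype.card_fin]
    have habs : |M0.det| ≤ ((Fintype.piFinset Ba).card : ℝ) * G pst := by
      rw [hdet]
      calc |∑ p ∈ Fintype.piFinset Ba, (∏ a, co a (p a)) *
            Matrix.det (Matrix.of fun a => v (p a))|
          ≤ ∑ p ∈ Fintype.piFinset Ba, |(∏ a, co a (p a)) *
            Matrix.det (Matrix.of fun a => v (p a))| := Finset.abs_sum_le_sum_abs _ _
        _ ≤ ∑ _p ∈ Fintype.piFinset Ba, G pst := by
            refine Finset.sum_le_sum (fun p hp => ?_)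
            rw [abs_mul]
            have h1 : |∏ a, co a (p a)| ≤ 1 := by
              rw [Finset.abs_prod]
              refine Finset.prod_le_one (fun a _ => abs_nonneg _) (fun a _ => hco1 a (p a))
            have h2 : |Matrix.det (Matrix.of fun a => v (p a))| ≤ G pst := hpmax p hp
            calc |∏ a, co a (p a)| * |Matrix.det (Matrix.of fun a => v (p a))|
                ≤ 1 * G pst := by
                  refine mul_le_mul h1 h2 (abs_nonneg _) zero_le_one
              _ = G pst := one_mul _
        _ = ((Fintype.piFinset Ba).card : ℝ) * G pst := by
            rw [Finset.sum_const, nsmul_eq_mul]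
    have hdetp : Matrix.det (Matrix.of fun a => v (pst a)) ≠ 0 := by
      intro h0
      have hG0 : G pst = 0 := by rw [hG]; simp only []; rw [h0, abs_zero]
      rw [hG0, mul_zero] at habs
      have : M0.det = 0 := abs_nonpos_iff.mp habs
      rw [hSdet, this] at hpos
      norm_num at hpos
    have hpinj : Function.Injective pst := by
      intro a a' haa
      by_contra hne
      apply hdetp
      apply Matrix.det_zero_of_row_eq hne
      show v (pst a) = v (pst a')
      rw [haa]
    set T := Finset.image pst Finset.univ with hT
    have hTcard : T.card = k := by
      rw [hT, Finset.card_image_of_injective _ hpinj, Finset.card_univ, Fintype.card_fin]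
    have hpBa : ∀ a, pst a ∈ Ba a := fun a => (Fintype.mem_piFinset.mp hpmem) a
    have hpP : ∀ a, pst a ∈ P (ia a) :=
      fun a => (Finset.mem_inter.mp (hpadsub (Wa a) (hpBa a))).2
    have hTsub : T ⊆ Finset.univ.biUnion (fun i => c (Vs i)) := by
      intro l hl
      obtain ⟨a, _, rfl⟩ := Finset.mem_image.mp hl
      refine Finset.mem_biUnion.mpr ⟨ma a, Finset.mem_univ _, ?_⟩
      rw [hc]
      exact Finset.mem_biUnion.mpr ⟨ia a, Finset.mem_univ _, hpBa a⟩
    have hTbasis : ∀ i, (T ∩ P i).card = kk i := by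
      intro i
      have h1 : T ∩ P i = Finset.image pst (Finset.univ.filter (fun a => ia a = i)) := by
        ext l
        simp only [Finset.mem_inter, Finset.mem_image, Finset.mem_filter, Finset.mem_univ,
          true_and, hT]
        constructor
        · rintro ⟨⟨a, _, rfl⟩, hlP⟩
          exact ⟨a, huniq (hpP a) hlP, rfl⟩
        · rintro ⟨a, hai, rfl⟩
          exact ⟨⟨a, rfl⟩, hai ▸ hpP a⟩
      have h2 : S ∩ P i = Finset.image eS (Finset.univ.filter (fun a => ia a = i)) := by
        ext l
        simp only [Finset.mem_inter, Finset.mem_image, Finset.mem_filter, Finset.mem_univ,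
          true_and]
        constructor
        · rintro ⟨hlS, hlP⟩
          obtain ⟨a, rfl⟩ := heSsurj l hlS
          exact ⟨a, huniq (hia a) hlP, rfl⟩
        · rintro ⟨a, hai, rfl⟩
          exact ⟨heSmem a, hai ▸ hia a⟩
      rw [h1, Finset.card_image_of_injective _ hpinj, ← hbasis i, h2,
        Finset.card_image_of_injective _ heSinj]
    refine ⟨T, hTsub, hTcard, ?_⟩
    simp only []
    rw [if_pos hbasis, if_pos hTbasis]
    have hTdet : detVal n k v T = (Matrix.det (Matrix.of fun a => v (pst a)))^2 :=
      detVal_eq_sq v T pst hpinj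
        (fun a => Finset.mem_image.mpr ⟨a, Finset.mem_univ a, rfl⟩) hTcard
    rw [hSdet, hTdet]
    have hGle : G pst = |Matrix.det (Matrix.of fun a => v (pst a))| := rfl
    calc (M0.det)^2 = |M0.det|^2 := (sq_abs _).symm
      _ ≤ (((Fintype.piFinset Ba).card : ℝ) * G pst)^2 := by
          refine pow_le_pow_left₀ (abs_nonneg _) habs 2
      _ ≤ ((k:ℝ)^k * G pst)^2 := by
          refine pow_le_pow_left₀ (by positivity) ?_ 2
          refine mul_le_mul_of_nonneg_right ?_ (abs_nonneg _)
          calc ((Fintype.piFinset Ba).card : ℝ) ≤ ((k^k : ℕ) : ℝ) := by exact_mod_cast hNk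
            _ = (k:ℝ)^k := by push_cast; ring
      _ = (k:ℝ)^(2*k) * (G pst)^2 := by rw [mul_pow, ← pow_mul, Nat.mul_comm k 2]
      _ = (k:ℝ)^(2*k) * (Matrix.det (Matrix.of fun a => v (pst a)))^2 := by
          rw [hGle, sq_abs]
  · -- k < d : everything is zero
    set c : Finset (Fin n) → Finset (Fin n) :=
      fun V => if h : k ≤ V.card then (Finset.exists_subset_card_eq h).choose else V with hc
    have hsubc : ∀ V, c V ⊆ V := by
      intro V
      simp only [hc]
      split_ifs with h
      · exact (Finset.exists_subset_card_eq h).choose_spec.1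
      · exact Finset.Subset.refl V
    have hcardc : ∀ V, (c V).card ≤ k := by
      intro V
      simp only [hc]
      split_ifs with h
      · exact le_of_eq (Finset.exists_subset_card_eq h).choose_spec.2
      · exact (not_le.mp h).le
    have hminc : ∀ V, min V.card k ≤ (c V).card := by
      intro V
      simp only [hc]
      split_ifs with h
      · rw [(Finset.exists_subset_card_eq h).choose_spec.2]
        exact min_le_right _ _
      · exact min_le_left _ _
    refine ⟨c, hsubc, ?_, hsubc, ?_⟩
    · intro V
      rcases Nat.eq_zero_or_pos k with hk | hk
      · subst hk
        have := hcardc V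
        omega
      · calc (c V).card ≤ k := hcardc V
          _ = 1 * k := (one_mul k).symm
          _ ≤ s * k := Nat.mul_le_mul_right k (hks hk.ne')
    · intro m Vs S hSsub hScard
      obtain ⟨T, hT1, hT2⟩ := exists_T c hsubc hminc Vs S hSsub hScard
      refine ⟨T, hT1, hT2, ?_⟩
      have hzS : detVal n d v S = 0 := detVal_eq_zero v S (hScard ▸ hlt)
      have hzT : detVal n d v T = 0 := detVal_eq_zero v T (hT2 ▸ hlt)
      simp only []
      split_ifs <;> simp [hzS, hzT]
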